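/- Suppose T, A ∈ ℝ^{p×n} satisfy ‖T − A‖∞ ≤ λ·n^{−1/2} for some λ ≥ 0. Suppose v ∈ ℝ^p and w ∈ ℝ^n are unit vectors with at most k nonzero coordinates of v, such that v and w are respectively the leading left and right singular vectors of A (i.e., Aw = σ₁v and Aᵀv = σ₁w where σ₁ is the largest singular value of A), and let δ > 0 be the difference between the first and second singular values of A. Let (v̂, ŵ) be any maximizer over pairs of unit vectors (ṽ,w̃) ∈ S^{p−1} × S^{n−1} of ⟨T, ṽw̃ᵀ⟩ − λ‖ṽ‖₁. Then sin ∠(v̂, v) ≤ 4λ√k/δ. -/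

import Mathlib

open MeasureTheory ProbabilityTheory

noncomputable section

namespace MissInspect

/-- Euclidean (ℓ²) norm of a finite-dimensional real vector. -/
def l2norm {d : ℕ} (v : Fin d → ℝ) : ℝ := Real.sqrt (∑ i, (v i) ^ 2)

/-- ℓ¹ norm. -/
def l1norm {d : ℕ} (v : Fin d → ℝ) : ℝ := ∑ i, |v i|

/-- ℓ∞ norm. -/
def linfNorm {d : ℕ} (v : Fin d → ℝ) : ℝ := ⨆ i, |v i|

/-- Euclidean inner product. -/
def dotp {d : ℕ} (u v : Fin d → ℝ) : ℝ := ∑ i, u i * v i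

/-- Acute angle between two vectors. -/
def angle {d : ℕ} (u v : Fin d → ℝ) : ℝ :=
  Real.arccos (|dotp u v| / (l2norm u * l2norm v))

/-- Entrywise (Hadamard) product of two `p × n` arrays. -/
def hadamard {p n : ℕ} (A B : Fin p → Fin n → ℝ) : Fin p → Fin n → ℝ :=
  fun j t => A j t * B j t

/-- Frobenius norm. -/
def frobNorm {p n : ℕ} (A : Fin p → Fin n → ℝ) : ℝ :=
  Real.sqrt (∑ j, ∑ t, (A j t) ^ 2)

/-- Number of nonzero coordinates. -/
def suppCard {d : ℕ} (v : Fin d → ℝ) : ℕ :=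
  (Finset.univ.filter fun i => v i ≠ 0).card

/-- `L_{j,t}`: number of observations among the first `t` time points in row `j`. -/
def Lcount {p n : ℕ} (Om : Fin p → Fin n → ℝ) (j : Fin p) (t : ℕ) : ℝ :=
  ∑ r : Fin n, if (r : ℕ) < t then Om j r else 0

/-- `R_{j,t}`: number of observations among the last `t` time points in row `j`. -/
def Rcount {p n : ℕ} (Om : Fin p → Fin n → ℝ) (j : Fin p) (t : ℕ) : ℝ :=
  ∑ r : Fin n, if n - t ≤ (r : ℕ) then Om j r else 0

/-- The MissCUSUM transformation.  The column index `t : Fin (n-1)` corresponds to the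
paper's (1-based) time index `t+1`. -/
def missCUSUM {p n : ℕ} (M Om : Fin p → Fin n → ℝ) : Fin p → Fin (n - 1) → ℝ :=
  fun j t =>
    if 0 < Lcount Om j ((t : ℕ) + 1) ∧ 0 < Rcount Om j (n - ((t : ℕ) + 1)) then
      Real.sqrt (Lcount Om j ((t : ℕ) + 1) * Rcount Om j (n - ((t : ℕ) + 1)) /
          Lcount Om j n) *
        ((1 / Rcount Om j (n - ((t : ℕ) + 1))) *
            (∑ r : Fin n, if (t : ℕ) + 1 ≤ (r : ℕ) then M j r * Om j r else 0) -
          (1 / Lcount Om j ((t : ℕ) + 1)) *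
            (∑ r : Fin n, if (r : ℕ) < (t : ℕ) + 1 then M j r * Om j r else 0))
    else 0

/-- The ordinary CUSUM transformation: MissCUSUM with everything observed. -/
def cusum {p n : ℕ} (M : Fin p → Fin n → ℝ) : Fin p → Fin (n - 1) → ℝ :=
  missCUSUM M fun _ _ => 1

/-- `τ = n⁻¹ min(z, n−z)`. -/
def tau (n z : ℕ) : ℝ := ((min z (n - z) : ℕ) : ℝ) / (n : ℝ)

/-- The weighted norm `‖θ‖_{2,q}`. -/
def norm2q {p : ℕ} (θ q : Fin p → ℝ) : ℝ := Real.sqrt (∑ j, (θ j) ^ 2 * q j)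

/-- The mean matrix with a single changepoint at (1-based) location `z`. -/
def meanMat {p : ℕ} (n z : ℕ) (μ1 θ : Fin p → ℝ) : Fin p → Fin n → ℝ :=
  fun j t => if (t : ℕ) < z then μ1 j else μ1 j + θ j

/-- A real random variable is Bernoulli(q): {0,1}-valued with success probability `q`. -/
def IsBernoulli {Ω₀ : Type} [MeasurableSpace Ω₀] (P : Measure Ω₀) (Y : Ω₀ → ℝ) (q : ℝ) :
    Prop :=
  Measurable Y ∧ (∀ ω, Y ω = 0 ∨ Y ω = 1) ∧ P {ω | Y ω = 1} = ENNReal.ofReal q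

/-- `(X, Ω) ~ P_{n,p,z,θ,σ,q}`: the single-changepoint Gaussian data matrix with
row-homogeneous Bernoulli missingness, all entries of `X` and `Ω` jointly independent. -/
def IsModel {Ω₀ : Type} [MeasurableSpace Ω₀] (P : Measure Ω₀) {p : ℕ} (n z : ℕ)
    (μ1 θ : Fin p → ℝ) (σ : ℝ) (q : Fin p → ℝ) (X Om : Ω₀ → Fin p → Fin n → ℝ) : Prop :=
  (∀ j t, Measurable fun ω => X ω j t) ∧
  (∀ j t, Measure.map (fun ω => X ω j t) P =
      gaussianReal (meanMat n z μ1 θ j t) (Real.toNNReal (σ ^ 2))) ∧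
  (∀ j t, IsBernoulli P (fun ω => Om ω j t) (q j)) ∧
  iIndepFun
    (fun (i : Fin p × Fin n ⊕ Fin p × Fin n) ω =>
      Sum.elim (fun jt => X ω jt.1 jt.2) (fun jt => Om ω jt.1 jt.2) i) P

/-- The objective function `⟨T, v wᵀ⟩ − λ‖v‖₁`. -/
def objective {p m : ℕ} (T : Fin p → Fin m → ℝ) (lam : ℝ) (v : Fin p → ℝ)
    (w : Fin m → ℝ) : ℝ :=
  (∑ j, ∑ t, T j t * (v j * w t)) - lam * l1norm v

/-- `(v, w)` maximises the objective over the product of closed unit Euclidean balls. -/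
def IsMaxOnBalls {p m : ℕ} (T : Fin p → Fin m → ℝ) (lam : ℝ) (v : Fin p → ℝ)
    (w : Fin m → ℝ) : Prop :=
  l2norm v ≤ 1 ∧ l2norm w ≤ 1 ∧
    ∀ (v' : Fin p → ℝ) (w' : Fin m → ℝ), l2norm v' ≤ 1 → l2norm w' ≤ 1 →
      objective T lam v' w' ≤ objective T lam v w

/-- The submatrix of odd-numbered (1-based) columns. -/
def oddCols {p n : ℕ} (M : Fin p → Fin n → ℝ) : Fin p → Fin (n / 2) → ℝ :=
  fun j t => M j ⟨2 * (t : ℕ), by have := t.isLt; omega⟩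

/-- The submatrix of even-numbered (1-based) columns. -/
def evenCols {p n : ℕ} (M : Fin p → Fin n → ℝ) : Fin p → Fin (n / 2) → ℝ :=
  fun j t => M j ⟨2 * (t : ℕ) + 1, by have := t.isLt; omega⟩

end MissInspect

namespace MissInspect

/-- `Mw`, the matrix–vector product. -/
def mulVecF {p n : ℕ} (M : Fin p → Fin n → ℝ) (w : Fin n → ℝ) : Fin p → ℝ :=
  fun j => ∑ t, M j t * w t


section Aux

set_option maxHeartbeats 2000000

variable {m q : ℕ}

lemma l2norm_nonneg (x : Fin m → ℝ) : 0 ≤ l2norm x := Real.sqrt_nonneg _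

lemma l1norm_nonneg (x : Fin m → ℝ) : 0 ≤ l1norm x :=
  Finset.sum_nonneg fun _ _ => abs_nonneg _

lemma l2norm_sq (x : Fin m → ℝ) : (l2norm x)^2 = ∑ i, (x i)^2 :=
  Real.sq_sqrt (Finset.sum_nonneg fun _ _ => sq_nonneg _)

lemma dotp_self_eq (x : Fin m → ℝ) : dotp x x = (l2norm x)^2 := by
  rw [l2norm_sq]
  exact Finset.sum_congr rfl fun i _ => (pow_two (x i)).symm

lemma abs_dotp_le (x y : Fin m → ℝ) : |dotp x y| ≤ l2norm x * l2norm y := by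
  have h : (dotp x y)^2 ≤ (∑ i, (x i)^2) * (∑ i, (y i)^2) :=
    Finset.sum_mul_sq_le_sq_mul_sq Finset.univ x y
  have h2 : |dotp x y| = Real.sqrt ((dotp x y)^2) := (Real.sqrt_sq_eq_abs _).symm
  rw [h2]
  calc Real.sqrt ((dotp x y)^2) ≤ Real.sqrt ((∑ i, (x i)^2) * (∑ i, (y i)^2)) :=
        Real.sqrt_le_sqrt h
    _ = l2norm x * l2norm y := by
        rw [Real.sqrt_mul (Finset.sum_nonneg fun _ _ => sq_nonneg _)]; rfl

lemma dotp_le (x y : Fin m → ℝ) : dotp x y ≤ l2norm x * l2norm y :=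
  (le_abs_self _).trans (abs_dotp_le x y)

lemma l1norm_le_sqrt_card {x : Fin m → ℝ} {k : ℕ} (h : suppCard x ≤ k) :
    l1norm x ≤ Real.sqrt k * l2norm x := by
  classical
  have h1 : l1norm x = ∑ i ∈ Finset.univ.filter (fun i => x i ≠ 0), |x i| := by
    rw [l1norm]
    symm
    apply Finset.sum_subset (Finset.filter_subset _ _)
    intro i _ hi
    simp only [Finset.mem_filter, Finset.mem_univ, true_and, not_not] at hi
    simp [hi]
  set s := Finset.univ.filter (fun i => x i ≠ 0) with hs
  have h2 : (∑ i ∈ s, |x i|)^2 ≤ (s.card : ℝ) * ∑ i ∈ s, |x i|^2 :=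
    sq_sum_le_card_mul_sum_sq
  have h3 : ∑ i ∈ s, |x i|^2 ≤ ∑ i, (x i)^2 := by
    calc ∑ i ∈ s, |x i|^2 = ∑ i ∈ s, (x i)^2 :=
          Finset.sum_congr rfl fun i _ => sq_abs _
      _ ≤ ∑ i, (x i)^2 :=
          Finset.sum_le_sum_of_subset_of_nonneg (Finset.subset_univ _)
            (fun i _ _ => sq_nonneg _)
  have h4 : ((s.card : ℕ) : ℝ) ≤ (k : ℝ) := by
    have : s.card ≤ k := h
    exact_mod_cast this
  have h5 : (l1norm x)^2 ≤ (k : ℝ) * ∑ i, (x i)^2 := by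
    rw [h1]
    calc (∑ i ∈ s, |x i|)^2 ≤ (s.card : ℝ) * ∑ i ∈ s, |x i|^2 := h2
      _ ≤ (k : ℝ) * ∑ i, (x i)^2 := by
          apply mul_le_mul h4 h3 (Finset.sum_nonneg fun _ _ => sq_nonneg _) (Nat.cast_nonneg _)
  calc l1norm x = Real.sqrt ((l1norm x)^2) := (Real.sqrt_sq (l1norm_nonneg x)).symm
    _ ≤ Real.sqrt ((k : ℝ) * ∑ i, (x i)^2) := Real.sqrt_le_sqrt h5
    _ = Real.sqrt k * l2norm x := by
        rw [Real.sqrt_mul (Nat.cast_nonneg _)]; rfl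

lemma l2norm_mono {x y : Fin m → ℝ} (h : ∀ i, (x i)^2 ≤ (y i)^2) :
    l2norm x ≤ l2norm y :=
  Real.sqrt_le_sqrt (Finset.sum_le_sum fun i _ => h i)

lemma l2sq_sub_smul (x y : Fin m → ℝ) (c : ℝ) :
    (l2norm (fun i => x i - c * y i))^2
      = (l2norm x)^2 - 2*c*(dotp x y) + c^2*(l2norm y)^2 := by
  rw [l2norm_sq, l2norm_sq, l2norm_sq]
  unfold dotp
  rw [Finset.mul_sum, Finset.mul_sum]
  rw [← Finset.sum_sub_distrib, ← Finset.sum_add_distrib]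
  exact Finset.sum_congr rfl fun i _ => by ring

end Aux

section Bilin

variable {p n : ℕ}

/-- auxiliary bilinear form -/
def bilinAux (B : Fin p → Fin n → ℝ) (x : Fin p → ℝ) (y : Fin n → ℝ) : ℝ :=
  ∑ j, ∑ t, B j t * x j * y t

lemma bilin_rows (B : Fin p → Fin n → ℝ) (x : Fin p → ℝ) (y : Fin n → ℝ) :
    bilinAux B x y = ∑ j, x j * (∑ t, B j t * y t) := by
  unfold bilinAux
  refine Finset.sum_congr rfl fun j _ => ?_
  rw [Finset.mul_sum]
  exact Finset.sum_congr rfl fun t _ => by ring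

lemma bilin_cols (B : Fin p → Fin n → ℝ) (x : Fin p → ℝ) (y : Fin n → ℝ) :
    bilinAux B x y = ∑ t, (∑ j, B j t * x j) * y t := by
  unfold bilinAux
  rw [Finset.sum_comm]
  refine Finset.sum_congr rfl fun t _ => ?_
  rw [Finset.sum_mul]

lemma bilin_eq_dotp (B : Fin p → Fin n → ℝ) (x : Fin p → ℝ) (y : Fin n → ℝ) :
    bilinAux B x y = dotp x (mulVecF B y) := by
  rw [bilin_rows]; rfl

lemma bilin_sub_left (B : Fin p → Fin n → ℝ) (x x' : Fin p → ℝ) (y : Fin n → ℝ) :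
    bilinAux B (fun j => x j - x' j) y = bilinAux B x y - bilinAux B x' y := by
  unfold bilinAux
  rw [← Finset.sum_sub_distrib]
  refine Finset.sum_congr rfl fun j _ => ?_
  rw [← Finset.sum_sub_distrib]
  exact Finset.sum_congr rfl fun t _ => by ring

lemma bilin_add_left (B : Fin p → Fin n → ℝ) (x x' : Fin p → ℝ) (y : Fin n → ℝ) :
    bilinAux B (fun j => x j + x' j) y = bilinAux B x y + bilinAux B x' y := by
  unfold bilinAux
  rw [← Finset.sum_add_distrib]
  refine Finset.sum_congr rfl fun j _ => ?_
  rw [← Finset.sum_add_distrib]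
  exact Finset.sum_congr rfl fun t _ => by ring

lemma bilin_sub_right (B : Fin p → Fin n → ℝ) (x : Fin p → ℝ) (y y' : Fin n → ℝ) :
    bilinAux B x (fun t => y t - y' t) = bilinAux B x y - bilinAux B x y' := by
  unfold bilinAux
  rw [← Finset.sum_sub_distrib]
  refine Finset.sum_congr rfl fun j _ => ?_
  rw [← Finset.sum_sub_distrib]
  exact Finset.sum_congr rfl fun t _ => by ring

lemma bilin_expand (B : Fin p → Fin n → ℝ) (x x' : Fin p → ℝ) (y y' : Fin n → ℝ)
    (c c' : ℝ) :
    bilinAux B (fun j => x j - c * x' j) (fun t => y t - c' * y' t)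
      = bilinAux B x y - c' * bilinAux B x y' - c * bilinAux B x' y
        + c * c' * bilinAux B x' y' := by
  unfold bilinAux
  calc (∑ j, ∑ t, B j t * (x j - c * x' j) * (y t - c' * y' t))
      = ∑ j, ∑ t, (B j t * x j * y t - c' * (B j t * x j * y' t)
          - c * (B j t * x' j * y t) + c * c' * (B j t * x' j * y' t)) :=
        Finset.sum_congr rfl fun j _ => Finset.sum_congr rfl fun t _ => by ring
    _ = _ := by
        simp only [Finset.sum_add_distrib, Finset.sum_sub_distrib, ← Finset.mul_sum]

lemma l2norm_mulVecF_le (A : Fin p → Fin n → ℝ) (u : Fin n → ℝ) :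
    l2norm (mulVecF A u) ≤ frobNorm A * l2norm u := by
  have h : ∑ j, (mulVecF A u j)^2 ≤ (∑ j, ∑ t, (A j t)^2) * ∑ t, (u t)^2 := by
    rw [Finset.sum_mul]
    refine Finset.sum_le_sum fun j _ => ?_
    exact Finset.sum_mul_sq_le_sq_mul_sq Finset.univ (A j) u
  unfold l2norm frobNorm
  calc Real.sqrt (∑ j, (mulVecF A u j)^2)
      ≤ Real.sqrt ((∑ j, ∑ t, (A j t)^2) * ∑ t, (u t)^2) := Real.sqrt_le_sqrt h
    _ = Real.sqrt (∑ j, ∑ t, (A j t)^2) * Real.sqrt (∑ t, (u t)^2) :=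
        Real.sqrt_mul (Finset.sum_nonneg fun _ _ =>
          Finset.sum_nonneg fun _ _ => sq_nonneg _) _

end Bilin


set_option maxHeartbeats 2000000

private lemma sq_le_nonneg_le {x y : ℝ} (hy : 0 ≤ y) (h : x^2 ≤ y^2) (hx : 0 ≤ x) : x ≤ y := by
  nlinarith [sq_nonneg (x - y), sq_nonneg (x + y)]

private lemma hsa_le_lem (a b sα e : ℝ) (he0 : 0 < e) (ha : 0 ≤ a) (hsα : 0 ≤ sα)
    (hsa2' : sα^2 = a^2*(4 - a^2)/4) (heef : e = 1 - b^2/2) (hb4 : 4*b^2 ≤ a^2) :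
    sα ≤ e * a := by
  have hfac : (0:ℝ) ≤ a^2/4 - b^2 + b^4/4 := by nlinarith [sq_nonneg (b^2)]
  have hmul : (0:ℝ) ≤ a^2 * (a^2/4 - b^2 + b^4/4) := mul_nonneg (sq_nonneg a) hfac
  have hsq : sα^2 ≤ (e*a)^2 := by rw [hsa2', heef]; nlinarith
  exact sq_le_nonneg_le (mul_nonneg he0.le ha) hsq hsα

private lemma stepD (δ K sα a b : ℝ) (hδ : 0 < δ) (hK : 0 ≤ K)
    (hsα : 0 ≤ sα) (hb : 0 ≤ b) (hapos : 0 < a) (ha1 : a^2 < 1)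
    (hsa2 : sα^2 = a^2*(4 - a^2)/4)
    (hD : δ*(a^2/2 + b^2/2 - a^2*b^2/4) ≤ 2*K*a + K*b)
    (hQ : a ≤ 2*b) : δ * sα ≤ 4*K := by
  have ha2' : 0 < 1 - a^2/2 := by nlinarith
  have e1 : (δ*sα)^2 = δ^2*(a^2*(4-a^2))/4 := by rw [mul_pow, hsa2]; ring
  by_cases hD1 : 2*K ≤ δ*(a*(1 - a^2/2))
  · have hbfac : K*(b - a/2) ≤ δ*((1 - a^2/2)*((b - a/2)*(b + a/2)))/2 := by
      have h1 : 0 ≤ b - a/2 := by linarith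
      have h2 : K ≤ δ*((1 - a^2/2)*(b + a/2))/2 := by nlinarith
      nlinarith [mul_nonneg h1 (sub_nonneg.mpr h2)]
    have hDa : δ*(10*a^2 - a^4) ≤ 40*K*a := by nlinarith
    have t1 : δ*(a*(10 - a^2)) ≤ 40*K := by
      refine le_of_mul_le_mul_right ?_ hapos
      nlinarith
    have t1nn : 0 ≤ δ*(a*(10 - a^2)) :=
      mul_nonneg hδ.le (mul_nonneg hapos.le (by nlinarith))
    have t2 : (δ*(a*(10 - a^2)))^2 ≤ (40*K)^2 := by
      have := mul_self_le_mul_self t1nn t1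
      nlinarith
    have e2 : (δ*(a*(10-a^2)))^2 = δ^2*(a^2*(10-a^2)^2) := by ring
    have e3 : 25*(a^2*(4-a^2)) ≤ a^2*(10-a^2)^2 := by
      nlinarith [sq_nonneg (a^2), sq_nonneg (a^3)]
    have e5 : δ^2*(25*(a^2*(4-a^2))) ≤ δ^2*(a^2*(10-a^2)^2) :=
      mul_le_mul_of_nonneg_left e3 (sq_nonneg δ)
    have hsq : (δ*sα)^2 ≤ (4*K)^2 := by
      rw [e1]; rw [e2] at t2; nlinarith
    exact sq_le_nonneg_le (by linarith) hsq (mul_nonneg hδ.le hsα)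
  · push_neg at hD1
    have hnn : 0 ≤ δ*(a*(1 - a^2/2)) :=
      mul_nonneg hδ.le (mul_nonneg hapos.le ha2'.le)
    have h2 : (δ*(a*(1 - a^2/2)))^2 < (2*K)^2 := by
      have := mul_self_lt_mul_self hnn hD1
      nlinarith
    have e4 : a^2*(4-a^2) ≤ 16*(a*(1-a^2/2))^2 := by
      nlinarith [mul_nonneg (sub_nonneg.mpr ha1.le) (by nlinarith : (0:ℝ) ≤ 11 - 4*a^2), sq_nonneg a]
    have e6 : δ^2*(a^2*(4-a^2)) ≤ δ^2*(16*(a*(1-a^2/2))^2) :=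
      mul_le_mul_of_nonneg_left e4 (sq_nonneg δ)
    have hsq : (δ*sα)^2 ≤ (4*K)^2 := by
      rw [e1]; nlinarith
    exact sq_le_nonneg_le (by linarith) hsq (mul_nonneg hδ.le hsα)

lemma key_ineq (δ K σ₁ σ₂ d e c₂ sα sβ a b : ℝ)
    (hδ : 0 < δ) (hK : 0 ≤ K) (hσ₂0 : 0 ≤ σ₂) (hσ : σ₁ = σ₂ + δ)
    (hd0 : 0 ≤ d) (hd1 : d ≤ 1) (he1 : e ≤ 1) (he1' : -1 ≤ e)
    (hsα : 0 ≤ sα) (hsβ : 0 ≤ sβ) (ha : 0 ≤ a) (hb : 0 ≤ b)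
    (hsα2 : sα^2 = 1 - d^2) (hsβ2 : sβ^2 = 1 - e^2)
    (ha2 : a^2 = 2 - 2*d) (hb2 : b^2 = 2 - 2*e)
    (hc₂ : |c₂| ≤ σ₂ * (sα * sβ))
    (h1c : σ₁ * (1 - d*e) - c₂ ≤ 2*K)
    (h1 : σ₁ * (1 - d*e) - c₂ ≤ 2*K*a + K*b)
    (h2 : σ₁ * e * (1 - d) - c₂ ≤ 2*K*a) :
    δ * sα ≤ 4 * K := by
  have hc₂' : c₂ ≤ σ₂ * (sα * sβ) := (abs_le.mp hc₂).2
  have hssnn : 0 ≤ sα * sβ := mul_nonneg hsα hsβ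
  have h1de0 : 0 ≤ 1 - d*e := by nlinarith
  have hss : sα * sβ ≤ 1 - d*e := by
    have hrw : (sα*sβ)^2 = (1-d^2)*(1-e^2) := by rw [mul_pow, hsα2, hsβ2]
    have hsq : (sα*sβ)^2 ≤ (1 - d*e)^2 := by rw [hrw]; nlinarith [sq_nonneg (d - e)]
    exact sq_le_nonneg_le h1de0 hsq hssnn
  have hX : δ * (1 - d*e) ≤ σ₁ * (1 - d*e) - c₂ := by
    nlinarith [mul_nonneg hσ₂0 (sub_nonneg.mpr hss)]
  by_cases h4K : δ ≤ 4*K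
  · have hsα1 : sα ≤ 1 := by nlinarith [sq_nonneg d]
    nlinarith
  push_neg at h4K
  have hcr : δ * (1 - d*e) ≤ 2*K := le_trans hX h1c
  have hde : 1/2 < d*e := by nlinarith
  have he0 : 0 < e := by nlinarith
  have hd0' : 0 < d := by nlinarith
  have hPa : δ * a^2 ≤ 4*K := by
    nlinarith [mul_nonneg (mul_nonneg hd0 hδ.le) (sub_nonneg.mpr he1)]
  have hQb : δ * b^2 ≤ 4*K := by
    nlinarith [mul_nonneg (mul_nonneg he0.le hδ.le) (sub_nonneg.mpr hd1)]
  have ha1 : a^2 < 1 := by nlinarith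
  have hb1 : b^2 < 1 := by nlinarith
  rcases eq_or_lt_of_le ha with haz | hapos
  · have h0 : sα^2 = 0 := by nlinarith
    have : sα = 0 := by nlinarith
    nlinarith
  have hdef : d = 1 - a^2/2 := by linarith
  have heef : e = 1 - b^2/2 := by linarith
  have hsa2' : sα^2 = a^2*(4 - a^2)/4 := by rw [hsα2, hdef]; ring
  have hD : δ*(a^2/2 + b^2/2 - a^2*b^2/4) ≤ 2*K*a + K*b := by
    have hrw2 : (1 : ℝ) - d*e = a^2/2 + b^2/2 - a^2*b^2/4 := by rw [hdef, heef]; ring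
    have := le_trans hX h1
    rw [hrw2] at this; exact this
  by_cases hcase : sα * sβ ≤ e * (1 - d)
  · have h2' : δ * (e * (1 - d)) ≤ 2*K*a := by
      nlinarith [mul_nonneg hσ₂0 (sub_nonneg.mpr hcase)]
    by_cases hb4 : 4*b^2 ≤ a^2
    · have hea : δ * (e * a) ≤ 4*K := by
        refine le_of_mul_le_mul_right ?_ hapos
        have h := h2'
        rw [hdef] at h
        linarith
      have hsa_le : sα ≤ e * a := hsa_le_lem a b sα e he0 ha hsα hsa2' heef hb4
      calc δ * sα ≤ δ * (e*a) := mul_le_mul_of_nonneg_left hsa_le hδ.le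
        _ ≤ 4*K := hea
    · push_neg at hb4
      have hQ : a ≤ 2*b := by
        refine sq_le_nonneg_le (by linarith) ?_ ha
        have : (2*b)^2 = 4*b^2 := by ring
        linarith
      exact stepD δ K sα a b hδ hK hsα hb hapos ha1 hsa2' hD hQ
  · push_neg at hcase
    have hQ : a ≤ 2*b := by
      by_contra hcon
      push_neg at hcon
      have hbb : (0:ℝ) ≤ 2*b := by linarith
      have h2b := mul_self_lt_mul_self hbb hcon
      have h4b : 0 < a^2 - 4*b^2 := by linarith [h2b]
      have hsb2' : sβ^2 = b^2*(4 - b^2)/4 := by rw [hsβ2, heef]; ring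
      have hnn : 0 ≤ e*(1-d) := mul_nonneg he0.le (by linarith)
      have hsq2 : (e*(1-d))^2 < (sα*sβ)^2 := by
        have hms := mul_self_lt_mul_self hnn hcase
        linarith [hms]
      have hkey : (e*(1-d))^2 - (sα*sβ)^2 = (a^2/2)*((a^2 - 4*b^2)/2 + b^4/2) := by
        rw [mul_pow, mul_pow, hsa2', hsb2', hdef, heef]; ring
      have hin : (0:ℝ) ≤ (a^2 - 4*b^2)/2 + b^4/2 := by
        have := sq_nonneg (b^2)
        linarith
      have hpos : (0:ℝ) ≤ (a^2/2)*((a^2 - 4*b^2)/2 + b^4/2) :=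
        mul_nonneg (by positivity) hin
      linarith
    exact stepD δ K sα a b hδ hK hsα hb hapos ha1 hsa2' hD hQ


set_option maxHeartbeats 4000000

/-- Lemma 2 (curvature / sin-angle bound for the penalised maximiser). -/
theorem statement_10 (p n k : ℕ) (T A : Fin p → Fin n → ℝ) (lam : ℝ) (hlam : 0 ≤ lam)
    (hTA : ∀ j t, |T j t - A j t| ≤ lam / Real.sqrt (n : ℝ))
    (v : Fin p → ℝ) (w : Fin n → ℝ) (hv : l2norm v = 1) (hw : l2norm w = 1)
    (hk : suppCard v ≤ k)
    (σ₁ σ₂ : ℝ)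
    -- σ₁ is the largest singular value of A
    (hσ₁ : σ₁ = sSup {x | ∃ u : Fin n → ℝ, l2norm u ≤ 1 ∧ x = l2norm (mulVecF A u)})
    -- v and w are leading left and right singular vectors: Aw = σ₁v and Aᵀv = σ₁w
    (hAw : ∀ j, mulVecF A w j = σ₁ * v j)
    (hAtv : ∀ t, (∑ j, A j t * v j) = σ₁ * w t)
    -- σ₂ is the second singular value of A
    (hσ₂ : σ₂ = sSup {x | ∃ u : Fin n → ℝ, l2norm u ≤ 1 ∧ dotp u w = 0 ∧
        x = l2norm (mulVecF A u)})
    (δ : ℝ) (hδ : δ = σ₁ - σ₂) (hδpos : 0 < δ)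
    (vhat : Fin p → ℝ) (what : Fin n → ℝ)
    (hvhat : l2norm vhat = 1) (hwhat : l2norm what = 1)
    (hmax : ∀ (v' : Fin p → ℝ) (w' : Fin n → ℝ), l2norm v' = 1 → l2norm w' = 1 →
      objective T lam v' w' ≤ objective T lam vhat what) :
    Real.sin (angle vhat v) ≤ 4 * lam * Real.sqrt (k : ℝ) / δ := by
  classical
  -- dimensions: n ≠ 0
  rcases Nat.eq_zero_or_pos n with hn0 | hnpos
  · exfalso
    subst hn0
    rw [l2norm] at hw
    simp at hw
  have hsn : (0:ℝ) < Real.sqrt n := Real.sqrt_pos.mpr (by exact_mod_cast hnpos)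
  set K := lam * Real.sqrt k with hKdef
  have hK : 0 ≤ K := mul_nonneg hlam (Real.sqrt_nonneg _)
  -- sign-flip so that ⟨vhat, v'⟩ ≥ 0
  set ε : ℝ := if 0 ≤ dotp vhat v then 1 else -1 with hεdef
  have hε1 : ε = 1 ∨ ε = -1 := by
    rw [hεdef]; split <;> simp
  have hε2 : ε^2 = 1 := by rcases hε1 with h | h <;> rw [h] <;> norm_num
  have hεabs : |ε| = 1 := by rcases hε1 with h | h <;> rw [h] <;> norm_num
  set v' : Fin p → ℝ := fun j => ε * v j with hv'def
  set w' : Fin n → ℝ := fun t => ε * w t with hw'def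
  have hsq_eq : ∀ (x : ℝ), (ε * x)^2 = x^2 := by
    intro x; rw [mul_pow, hε2, one_mul]
  have hl2v' : l2norm v' = 1 := by
    rw [hv'def, l2norm]
    rw [show (∑ j, (ε * v j)^2) = ∑ j, (v j)^2 from Finset.sum_congr rfl fun j _ => hsq_eq _]
    rw [← l2norm, hv]
  have hl2w' : l2norm w' = 1 := by
    rw [hw'def, l2norm]
    rw [show (∑ t, (ε * w t)^2) = ∑ t, (w t)^2 from Finset.sum_congr rfl fun t _ => hsq_eq _]
    rw [← l2norm, hw]
  have hl1v' : l1norm v' = l1norm v := by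
    rw [hv'def, l1norm, l1norm]
    exact Finset.sum_congr rfl fun j _ => by rw [abs_mul, hεabs, one_mul]
  have hl1v : l1norm v ≤ Real.sqrt k := by
    have := l1norm_le_sqrt_card hk
    rwa [hv, mul_one] at this
  -- d and e
  set d := dotp vhat v' with hd_def
  set e := dotp what w' with he_def
  have hd_eq : d = ε * dotp vhat v := by
    rw [hd_def, hv'def, dotp, dotp, Finset.mul_sum]
    exact Finset.sum_congr rfl fun j _ => by ring
  have hd0 : 0 ≤ d := by
    rw [hd_eq, hεdef]
    split
    · rename_i h; linarith only [h]
    · rename_i h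
      push_neg at h
      linarith only [h.le]
  have hd_abs : d = |dotp vhat v| := by
    rw [hd_eq, hεdef]
    split
    · rename_i h; rw [one_mul, abs_of_nonneg h]
    · rename_i h; push_neg at h; rw [abs_of_neg h]; ring
  have hd1 : d ≤ 1 := by
    have := abs_dotp_le vhat v'
    rw [hvhat, hl2v', one_mul] at this
    calc d ≤ |d| := le_abs_self _
      _ ≤ 1 := this
  have heabs : |e| ≤ 1 := by
    have := abs_dotp_le what w'
    rwa [hwhat, hl2w', one_mul] at this
  have he1 : e ≤ 1 := (le_abs_self _).trans heabs
  have he1' : -1 ≤ e := neg_le_of_abs_le heabs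
  -- singular-vector identities for the flipped pair
  have hAw' : mulVecF A w' = fun j => σ₁ * v' j := by
    funext j
    rw [mulVecF, hw'def]
    calc (∑ t, A j t * (ε * w t)) = ε * ∑ t, A j t * w t := by
          rw [Finset.mul_sum]; exact Finset.sum_congr rfl fun t _ => by ring
      _ = ε * (σ₁ * v j) := by rw [← mulVecF, hAw j]
      _ = σ₁ * (ε * v j) := by ring
  have hAtv' : ∀ t, (∑ j, A j t * v' j) = σ₁ * w' t := by
    intro t
    rw [hv'def, hw'def]
    calc (∑ j, A j t * (ε * v j)) = ε * ∑ j, A j t * v j := by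
          rw [Finset.mul_sum]; exact Finset.sum_congr rfl fun j _ => by ring
      _ = ε * (σ₁ * w t) := by rw [hAtv t]
      _ = σ₁ * (ε * w t) := by ring
  -- bilinear identities
  have hMw' : ∀ x : Fin p → ℝ, bilinAux A x w' = σ₁ * dotp x v' := by
    intro x
    rw [bilin_eq_dotp, hAw', dotp, dotp, Finset.mul_sum]
    exact Finset.sum_congr rfl fun j _ => by ring
  have hMv' : ∀ y : Fin n → ℝ, bilinAux A v' y = σ₁ * dotp w' y := by
    intro y
    rw [bilin_cols, dotp, Finset.mul_sum]
    refine Finset.sum_congr rfl fun t _ => ?_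
    rw [hAtv' t]; ring
  have hvv' : dotp v' v' = 1 := by rw [dotp_self_eq, hl2v']; norm_num
  have hww' : dotp w' w' = 1 := by rw [dotp_self_eq, hl2w']; norm_num
  -- σ₂ is an upper bound for ‖Au‖ on {u ⊥ w, ‖u‖ ≤ 1}
  have hbdd : BddAbove {x | ∃ u : Fin n → ℝ, l2norm u ≤ 1 ∧ dotp u w = 0 ∧
      x = l2norm (mulVecF A u)} := by
    refine ⟨frobNorm A, ?_⟩
    rintro x ⟨u, hu, -, rfl⟩
    calc l2norm (mulVecF A u) ≤ frobNorm A * l2norm u := l2norm_mulVecF_le A u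
      _ ≤ frobNorm A * 1 := by
          apply mul_le_mul_of_nonneg_left hu (Real.sqrt_nonneg _)
      _ = frobNorm A := mul_one _
  have hσ₂0 : 0 ≤ σ₂ := by
    rw [hσ₂]
    apply le_csSup hbdd
    refine ⟨fun _ => 0, ?_, ?_, ?_⟩
    · rw [l2norm]; simp
    · rw [dotp]; simp
    · simp [mulVecF, l2norm]
  have hσ₁δ : σ₁ = σ₂ + δ := by rw [hδ]; ring
  have hAz : ∀ z : Fin n → ℝ, dotp z w = 0 →
      l2norm (mulVecF A z) ≤ σ₂ * l2norm z := by
    intro z hz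
    by_cases hz0 : l2norm z = 0
    · have hzz : ∀ t, z t = 0 := by
        intro t
        have hsum : (∑ t, (z t)^2) = 0 := by
          have := l2norm_sq z
          rw [hz0] at this
          norm_num at this
          linarith [this]
        have := (Finset.sum_eq_zero_iff_of_nonneg
          (fun i _ => sq_nonneg (z i))).mp hsum t (Finset.mem_univ t)
        exact pow_eq_zero_iff (n := 2) (by norm_num) |>.mp this
      have : mulVecF A z = fun _ => 0 := by
        funext j
        rw [mulVecF]
        apply Finset.sum_eq_zero
        intro t _
        rw [hzz t, mul_zero]
      rw [this, hz0, mul_zero, l2norm]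
      simp
    · have hzpos : 0 < l2norm z := lt_of_le_of_ne (l2norm_nonneg z) (Ne.symm hz0)
      set c : ℝ := (l2norm z)⁻¹ with hc_def
      have hcpos : 0 < c := inv_pos.mpr hzpos
      set z1 : Fin n → ℝ := fun t => c * z t with hz1def
      have hl2z1 : l2norm z1 = 1 := by
        rw [hz1def, l2norm]
        rw [show (∑ t, (c * z t)^2) = c^2 * ∑ t, (z t)^2 from by
          rw [Finset.mul_sum]; exact Finset.sum_congr rfl fun t _ => by ring]
        rw [Real.sqrt_mul (sq_nonneg c), Real.sqrt_sq hcpos.le, ← l2norm,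
          hc_def, inv_mul_cancel₀ hz0]
      have hdz1 : dotp z1 w = 0 := by
        rw [hz1def, dotp]
        rw [show (∑ t, c * z t * w t) = c * ∑ t, z t * w t from by
          rw [Finset.mul_sum]; exact Finset.sum_congr rfl fun t _ => by ring]
        rw [← dotp, hz, mul_zero]
      have hmem : l2norm (mulVecF A z1) ≤ σ₂ := by
        rw [hσ₂]
        exact le_csSup hbdd ⟨z1, le_of_eq hl2z1, hdz1, rfl⟩
      have hAz1 : mulVecF A z1 = fun j => c * mulVecF A z j := by
        funext j
        rw [mulVecF, mulVecF, hz1def, Finset.mul_sum]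
        exact Finset.sum_congr rfl fun t _ => by ring
      have hl2Az1 : l2norm (mulVecF A z1) = c * l2norm (mulVecF A z) := by
        rw [hAz1, l2norm, l2norm]
        rw [show (∑ j, (c * mulVecF A z j)^2) = c^2 * ∑ j, (mulVecF A z j)^2 from by
          rw [Finset.mul_sum]; exact Finset.sum_congr rfl fun j _ => by ring]
        rw [Real.sqrt_mul (sq_nonneg c), Real.sqrt_sq hcpos.le]
      rw [hl2Az1] at hmem
      calc l2norm (mulVecF A z)
          = l2norm z * (c * l2norm (mulVecF A z)) := by
            rw [hc_def]; field_simp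
        _ ≤ l2norm z * σ₂ := mul_le_mul_of_nonneg_left hmem hzpos.le
        _ = σ₂ * l2norm z := mul_comm _ _
  -- residuals
  set r : Fin p → ℝ := fun j => vhat j - d * v' j with hr_def
  set ρ : Fin n → ℝ := fun t => what t - e * w' t with hρ_def
  set sα := l2norm r with hsα_def
  set sβ := l2norm ρ with hsβ_def
  have hsα2 : sα^2 = 1 - d^2 := by
    rw [hsα_def, hr_def, l2sq_sub_smul, hvhat, hl2v', ← hd_def]
    ring
  have hsβ2 : sβ^2 = 1 - e^2 := by
    rw [hsβ_def, hρ_def, l2sq_sub_smul, hwhat, hl2w', ← he_def]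
    ring
  have hρw : dotp ρ w = 0 := by
    have hρw' : dotp ρ w' = 0 := by
      rw [hρ_def, dotp]
      rw [show (∑ t, (what t - e * w' t) * w' t)
          = (∑ t, what t * w' t) - e * ∑ t, w' t * w' t from by
        rw [Finset.mul_sum, ← Finset.sum_sub_distrib]
        exact Finset.sum_congr rfl fun t _ => by ring]
      rw [← dotp, ← dotp, ← he_def, hww', mul_one, sub_self]
    have : dotp ρ w' = ε * dotp ρ w := by
      rw [dotp, dotp, hw'def, Finset.mul_sum]
      exact Finset.sum_congr rfl fun t _ => by ring
    rw [this] at hρw'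
    rcases hε1 with h | h <;> rw [h] at hρw' <;> linarith only [hρw']
  -- c₂ and its bound
  set c₂ := bilinAux A vhat what - σ₁ * d * e with hc₂_def
  have hc₂rρ : c₂ = bilinAux A r ρ := by
    have hexp := bilin_expand A vhat v' what w' d e
    have h1 : bilinAux A vhat w' = σ₁ * d := by rw [hMw' vhat, ← hd_def]
    have h2 : bilinAux A v' what = σ₁ * e := by
      rw [hMv' what]
      have : dotp w' what = e := by
        rw [he_def, dotp, dotp]; exact Finset.sum_congr rfl fun t _ => by ring
      rw [this]
    have h3 : bilinAux A v' w' = σ₁ := by rw [hMw' v', hvv', mul_one]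
    rw [hc₂_def]
    rw [show bilinAux A r ρ
        = bilinAux A (fun j => vhat j - d * v' j) (fun t => what t - e * w' t) from by
      rw [hr_def, hρ_def]]
    rw [hexp, h1, h2, h3]
    ring
  have hc₂bound : |c₂| ≤ σ₂ * (sα * sβ) := by
    rw [hc₂rρ, bilin_eq_dotp]
    calc |dotp r (mulVecF A ρ)| ≤ l2norm r * l2norm (mulVecF A ρ) := abs_dotp_le _ _
      _ ≤ l2norm r * (σ₂ * l2norm ρ) := by
          apply mul_le_mul_of_nonneg_left (hAz ρ hρw) (l2norm_nonneg r)
      _ = σ₂ * (sα * sβ) := by rw [hsα_def, hsβ_def]; ring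
  -- noise matrix and bounds
  set Bg : Fin p → Fin n → ℝ := fun j t => T j t - A j t with hBg_def
  have hrowG : ∀ (j : Fin p) (y : Fin n → ℝ), |∑ t, Bg j t * y t| ≤ lam * l2norm y := by
    intro j y
    have hl1y : l1norm y ≤ Real.sqrt n * l2norm y := by
      apply l1norm_le_sqrt_card
      calc suppCard y ≤ Finset.univ.card := Finset.card_filter_le _ _
        _ = n := by simp
    calc |∑ t, Bg j t * y t| ≤ ∑ t, |Bg j t * y t| := Finset.abs_sum_le_sum_abs _ _
      _ ≤ ∑ t, (lam / Real.sqrt n) * |y t| := by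
          refine Finset.sum_le_sum fun t _ => ?_
          rw [abs_mul]
          apply mul_le_mul_of_nonneg_right _ (abs_nonneg _)
          rw [hBg_def]
          exact hTA j t
      _ = (lam / Real.sqrt n) * l1norm y := by rw [l1norm, Finset.mul_sum]
      _ ≤ (lam / Real.sqrt n) * (Real.sqrt n * l2norm y) := by
          apply mul_le_mul_of_nonneg_left hl1y
          positivity
      _ = lam * l2norm y := by field_simp
  have hG : ∀ (x : Fin p → ℝ) (y : Fin n → ℝ),
      |bilinAux Bg x y| ≤ lam * l1norm x * l2norm y := by
    intro x y
    rw [bilin_rows]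
    calc |∑ j, x j * (∑ t, Bg j t * y t)| ≤ ∑ j, |x j * (∑ t, Bg j t * y t)| :=
          Finset.abs_sum_le_sum_abs _ _
      _ ≤ ∑ j, |x j| * (lam * l2norm y) := by
          refine Finset.sum_le_sum fun j _ => ?_
          rw [abs_mul]
          exact mul_le_mul_of_nonneg_left (hrowG j y) (abs_nonneg _)
      _ = l1norm x * (lam * l2norm y) := by rw [l1norm, Finset.sum_mul]
      _ = lam * l1norm x * l2norm y := by ring
  -- objective rewriting and comparison
  have hobj : ∀ (x : Fin p → ℝ) (y : Fin n → ℝ),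
      objective T lam x y = bilinAux A x y + bilinAux Bg x y - lam * l1norm x := by
    intro x y
    rw [objective, bilinAux, bilinAux]
    rw [show (∑ j, ∑ t, A j t * x j * y t) + (∑ j, ∑ t, Bg j t * x j * y t)
        = ∑ j, ∑ t, T j t * (x j * y t) from by
      rw [← Finset.sum_add_distrib]
      refine Finset.sum_congr rfl fun j _ => ?_
      rw [← Finset.sum_add_distrib]
      refine Finset.sum_congr rfl fun t _ => ?_
      rw [hBg_def]; ring]
  have hcomp : ∀ (x : Fin p → ℝ) (y : Fin n → ℝ), l2norm x = 1 → l2norm y = 1 →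
      bilinAux A x y - bilinAux A vhat what
        ≤ (bilinAux Bg vhat what - bilinAux Bg x y)
          + lam * (l1norm x - l1norm vhat) := by
    intro x y hx hy
    have := hmax x y hx hy
    rw [hobj x y, hobj vhat what] at this
    linarith only [this]
  -- the support-splitting bound
  set u : Fin p → ℝ := fun j => vhat j - v' j with hu_def
  set z : Fin n → ℝ := fun t => what t - w' t with hz_def
  set a := l2norm u with ha_def
  set b := l2norm z with hb_def
  have ha : 0 ≤ a := l2norm_nonneg u
  have hb : 0 ≤ b := l2norm_nonneg z
  have ha2 : a^2 = 2 - 2*d := by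
    rw [ha_def, hu_def]
    rw [show (fun j => vhat j - v' j) = fun j => vhat j - (1:ℝ) * v' j from by
      funext j; rw [one_mul]]
    rw [l2sq_sub_smul, hvhat, hl2v', ← hd_def]
    ring
  have hb2 : b^2 = 2 - 2*e := by
    rw [hb_def, hz_def]
    rw [show (fun t => what t - w' t) = fun t => what t - (1:ℝ) * w' t from by
      funext t; rw [one_mul]]
    rw [l2sq_sub_smul, hwhat, hl2w', ← he_def]
    ring
  set uS : Fin p → ℝ := fun j => if v j = 0 then 0 else u j with huS_def
  set uC : Fin p → ℝ := fun j => if v j = 0 then vhat j else 0 with huC_def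
  have husum : (fun j => uS j + uC j) = u := by
    funext j
    by_cases hj : v j = 0
    · rw [huS_def, huC_def, hu_def]
      simp only [hj, if_true, hv'def, mul_zero, sub_zero, zero_add]
    · rw [huS_def, huC_def]
      simp only [hj, if_false, add_zero]
  have hsuppS : suppCard uS ≤ k := by
    refine le_trans ?_ hk
    apply Finset.card_le_card
    intro j hj
    simp only [Finset.mem_filter, Finset.mem_univ, true_and] at hj ⊢
    intro hvj
    apply hj
    rw [huS_def]
    simp [hvj]
  have hl2uS : l2norm uS ≤ a := by
    rw [ha_def]
    apply l2norm_mono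
    intro j
    rw [huS_def]
    by_cases hj : v j = 0
    · simp only [hj, if_true]
      exact le_trans (by norm_num) (sq_nonneg _)
    · simp only [hj, if_false]
      exact le_refl _
  have hl1uS : l1norm uS ≤ Real.sqrt k * a :=
    le_trans (l1norm_le_sqrt_card hsuppS)
      (mul_le_mul_of_nonneg_left hl2uS (Real.sqrt_nonneg _))
  have hpen : l1norm v' - l1norm vhat ≤ l1norm uS - l1norm uC := by
    rw [l1norm, l1norm, l1norm, l1norm, ← Finset.sum_sub_distrib, ← Finset.sum_sub_distrib]
    refine Finset.sum_le_sum fun j _ => ?_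
    by_cases hj : v j = 0
    · rw [huS_def, huC_def, hv'def]
      simp only [hj, if_true, mul_zero, abs_zero, zero_sub, neg_le_neg_iff, le_refl]
    · rw [huS_def, huC_def, hu_def]
      simp only [hj, if_false, abs_zero, sub_zero]
      have h1 := abs_sub_abs_le_abs_sub (v' j) (vhat j)
      have h2 : |v' j - vhat j| = |vhat j - v' j| := abs_sub_comm _ _
      linarith
  have hsplit : ∀ y : Fin n → ℝ, l2norm y = 1 →
      (bilinAux Bg vhat y - bilinAux Bg v' y) + lam * (l1norm v' - l1norm vhat)
        ≤ 2 * K * a := by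
    intro y hy
    have hdiff : bilinAux Bg vhat y - bilinAux Bg v' y
        = bilinAux Bg uS y + bilinAux Bg uC y := by
      rw [← bilin_add_left, husum, hu_def, bilin_sub_left]
    have hbS : bilinAux Bg uS y ≤ lam * (Real.sqrt k * a) := by
      calc bilinAux Bg uS y ≤ |bilinAux Bg uS y| := le_abs_self _
        _ ≤ lam * l1norm uS * l2norm y := hG uS y
        _ = lam * l1norm uS := by rw [hy, mul_one]
        _ ≤ lam * (Real.sqrt k * a) := mul_le_mul_of_nonneg_left hl1uS hlam
    have hbC : bilinAux Bg uC y ≤ lam * l1norm uC := by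
      calc bilinAux Bg uC y ≤ |bilinAux Bg uC y| := le_abs_self _
        _ ≤ lam * l1norm uC * l2norm y := hG uC y
        _ = lam * l1norm uC := by rw [hy, mul_one]
    have hpen' : lam * (l1norm v' - l1norm vhat) ≤ lam * (l1norm uS - l1norm uC) :=
      mul_le_mul_of_nonneg_left hpen hlam
    have hl1uS' : lam * l1norm uS ≤ lam * (Real.sqrt k * a) :=
      mul_le_mul_of_nonneg_left hl1uS hlam
    have hKa : lam * (Real.sqrt k * a) + lam * (Real.sqrt k * a) = 2 * K * a := by
      rw [hKdef]; ring
    linarith only [hdiff, hbS, hbC, hpen', hl1uS', hKa]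
  -- the three master inequalities
  have hMv'w' : bilinAux A v' w' = σ₁ := by rw [hMw' v', hvv', mul_one]
  have hMv'what : bilinAux A v' what = σ₁ * e := by
    rw [hMv' what]
    have : dotp w' what = e := by
      rw [he_def, dotp, dotp]; exact Finset.sum_congr rfl fun t _ => by ring
    rw [this]
  have hGhat : bilinAux Bg vhat what ≤ lam * l1norm vhat := by
    calc bilinAux Bg vhat what ≤ |bilinAux Bg vhat what| := le_abs_self _
      _ ≤ lam * l1norm vhat * l2norm what := hG vhat what
      _ = lam * l1norm vhat := by rw [hwhat, mul_one]
  have hGv'w' : -(bilinAux Bg v' w') ≤ K := by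
    calc -(bilinAux Bg v' w') ≤ |bilinAux Bg v' w'| := neg_le_abs _
      _ ≤ lam * l1norm v' * l2norm w' := hG v' w'
      _ = lam * l1norm v := by rw [hl2w', mul_one, hl1v']
      _ ≤ K := by rw [hKdef]; exact mul_le_mul_of_nonneg_left hl1v hlam
  have hlamv : lam * l1norm v ≤ K := by
    rw [hKdef]; exact mul_le_mul_of_nonneg_left hl1v hlam
  have ineq1c : σ₁ * (1 - d*e) - c₂ ≤ 2*K := by
    have comp1 := hcomp v' w' hl2v' hl2w'
    rw [hMv'w'] at comp1
    have hLHS : σ₁ * (1 - d*e) - c₂ = σ₁ - bilinAux A vhat what := by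
      rw [hc₂_def]; ring
    rw [hLHS]
    have hpen2 : lam * (l1norm v' - l1norm vhat)
        = lam * l1norm v - lam * l1norm vhat := by rw [hl1v']; ring
    linarith only [comp1, hGhat, hGv'w', hlamv, hpen2]
  have ineq2 : σ₁ * e * (1 - d) - c₂ ≤ 2*K*a := by
    have comp2 := hcomp v' what hl2v' hwhat
    rw [hMv'what] at comp2
    have hs := hsplit what hwhat
    have hLHS : σ₁ * e * (1 - d) - c₂ = σ₁ * e - bilinAux A vhat what := by
      rw [hc₂_def]; ring
    rw [hLHS]
    linarith only [comp2, hs]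
  have ineq1 : σ₁ * (1 - d*e) - c₂ ≤ 2*K*a + K*b := by
    have comp1 := hcomp v' w' hl2v' hl2w'
    rw [hMv'w'] at comp1
    have hs := hsplit what hwhat
    have hdec : bilinAux Bg v' what - bilinAux Bg v' w'
        = bilinAux Bg v' z := by
      rw [hz_def, bilin_sub_right]
    have hGb : bilinAux Bg v' z ≤ K * b := by
      calc bilinAux Bg v' z ≤ |bilinAux Bg v' z| := le_abs_self _
        _ ≤ lam * l1norm v' * l2norm z := hG v' z
        _ = lam * l1norm v * b := by rw [hl1v', hb_def]
        _ ≤ K * b := mul_le_mul_of_nonneg_right hlamv hb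
    have hLHS : σ₁ * (1 - d*e) - c₂ = σ₁ - bilinAux A vhat what := by
      rw [hc₂_def]; ring
    rw [hLHS]
    linarith only [comp1, hs, hdec, hGb]
  -- invoke the arithmetic lemma
  have hkey := key_ineq δ K σ₁ σ₂ d e c₂ sα sβ a b hδpos hK hσ₂0 hσ₁δ hd0 hd1 he1 he1'
    (l2norm_nonneg r) (l2norm_nonneg ρ) ha hb hsα2 hsβ2 ha2 hb2 hc₂bound ineq1c ineq1 ineq2
  -- conclude
  have hangle : Real.sin (angle vhat v) = sα := by
    rw [angle, hvhat, hv, mul_one, div_one, Real.sin_arccos, ← hd_abs]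
    rw [show (1 : ℝ) - d^2 = sα^2 from by rw [hsα2]]
    exact Real.sqrt_sq (l2norm_nonneg r)
  rw [hangle, le_div_iff₀ hδpos]
  have h4 : 4 * K = 4 * lam * Real.sqrt k := by rw [hKdef]; ring
  have h5 : sα * δ = δ * sα := mul_comm _ _
  linarith only [hkey, h4, h5]
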